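/- Under the same setup (vertex normals N_k = (ν_k + ν_{k-1})/(1 + cos θ_k)), the squared norm |N_{k+1} − N_k|² equals (tan(θ_k/2) + tan(θ_{k+1}/2))². -/

import Mathlib

open Real Finset
open scoped RealInnerProductSpace

abbrev E2 := EuclideanSpace ℝ (Fin 2)

/-- Rotation by π/2 in the plane. -/
noncomputable def Rot (v : E2) : E2 :=
  (WithLp.equiv 2 (Fin 2 → ℝ)).symm ![-v 1, v 0]

/-- Rotation by angle θ in the plane. -/
noncomputable def RotBy (θ : ℝ) (v : E2) : E2 :=
  (WithLp.equiv 2 (Fin 2 → ℝ)).symm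
    ![Real.cos θ * v 0 - Real.sin θ * v 1, Real.sin θ * v 0 + Real.cos θ * v 1]

lemma norm_sq_E2 (x : E2) : ‖x‖ ^ 2 = x 0 ^ 2 + x 1 ^ 2 := by
  rw [← real_inner_self_eq_norm_sq, PiLp.inner_apply]
  simp [Fin.sum_univ_two, sq]

lemma inner_E2 (x y : E2) : ⟪x, y⟫ = x 0 * y 0 + x 1 * y 1 := by
  simp [PiLp.inner_apply, Fin.sum_univ_two]; ring

lemma one_add_cos_pos {x : ℝ} (hx : x ∈ Set.Ioo (-π) π) : 0 < 1 + Real.cos x := by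
  have hpos : 0 < Real.cos (x / 2) := by
    apply Real.cos_pos_of_mem_Ioo
    constructor
    · have := hx.1; linarith
    · have := hx.2; linarith
  have h := Real.cos_sq (x / 2)
  have h2 : 2 * (x / 2) = x := by ring
  rw [h2] at h
  nlinarith [hpos]

lemma tan_half_eq {x : ℝ} (hx : x ∈ Set.Ioo (-π) π) :
    Real.tan (x / 2) = Real.sin x / (1 + Real.cos x) := by
  have hpos : 0 < Real.cos (x / 2) := by
    apply Real.cos_pos_of_mem_Ioo
    constructor
    · have := hx.1; linarith
    · have := hx.2; linarith
  have hs : Real.sin x = 2 * Real.sin (x / 2) * Real.cos (x / 2) := by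
    rw [← Real.sin_two_mul]; ring_nf
  have hc : 1 + Real.cos x = 2 * Real.cos (x / 2) ^ 2 := by
    have h := Real.cos_sq (x / 2)
    have h2 : 2 * (x / 2) = x := by ring
    rw [h2] at h; linarith
  rw [Real.tan_eq_sin_div_cos, hs, hc]
  field_simp

theorem vertex_normal_diff_sq (n : ℕ) [NeZero n]
    (p : ZMod n → E2) (hreg : ∀ k, p (k + 1) ≠ p k)
    (ν : ZMod n → E2)
    (hν : ∀ k, ν k = Rot (‖p (k + 1) - p k‖⁻¹ • (p (k + 1) - p k)))
    (θ : ZMod n → ℝ) (hθrange : ∀ k, θ k ∈ Set.Ioo (-π) π)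
    (hθ : ∀ k, RotBy (θ k) (ν (k - 1)) = ν k)
    (N : ZMod n → E2)
    (hN : ∀ k, N k = (1 + Real.cos (θ k))⁻¹ • (ν k + ν (k - 1))) :
    ∀ k : ZMod n,
      ‖N (k + 1) - N k‖ ^ 2 = (Real.tan (θ k / 2) + Real.tan (θ (k + 1) / 2)) ^ 2 := by
  intro k
  set u0 := ν (k - 1) 0 with hu0
  set u1 := ν (k - 1) 1 with hu1
  set c := Real.cos (θ k) with hcdef
  set s := Real.sin (θ k) with hsdef
  set c' := Real.cos (θ (k + 1)) with hc'def
  set s' := Real.sin (θ (k + 1)) with hs'def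
  -- ν (k-1) is a unit vector
  have hku : k - 1 + 1 = k := by ring
  have hunit : u0 ^ 2 + u1 ^ 2 = 1 := by
    have h := hν (k - 1)
    rw [hku] at h
    set w : E2 := p k - p (k - 1) with hw
    have hwne : w ≠ 0 := by
      have h2 := sub_ne_zero.mpr (hreg (k - 1))
      rwa [hku] at h2
    have hn : ‖w‖ ≠ 0 := norm_ne_zero_iff.mpr hwne
    have h0 : u0 = -(‖w‖⁻¹ * w 1) := by
      rw [hu0, h]; simp [Rot, ← hw]
    have h1 : u1 = ‖w‖⁻¹ * w 0 := by
      rw [hu1, h]; simp [Rot, ← hw]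
    have hns : w 0 ^ 2 + w 1 ^ 2 = ‖w‖ ^ 2 := (norm_sq_E2 w).symm
    calc u0 ^ 2 + u1 ^ 2 = ‖w‖⁻¹ ^ 2 * ‖w‖ ^ 2 := by rw [h0, h1, ← hns]; ring
      _ = 1 := by field_simp
  -- components of ν k
  have hv0 : ν k 0 = c * u0 - s * u1 := by
    rw [← hθ k]; simp [RotBy]; rfl
  have hv1 : ν k 1 = s * u0 + c * u1 := by
    rw [← hθ k]; simp [RotBy]; rfl
  -- components of ν (k+1)
  have hk1 : (k + 1 : ZMod n) - 1 = k := add_sub_cancel_right k 1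
  have hw0 : ν (k + 1) 0 = c' * ν k 0 - s' * ν k 1 := by
    rw [← hθ (k + 1), hk1]; simp [RotBy]; rfl
  have hw1 : ν (k + 1) 1 = s' * ν k 0 + c' * ν k 1 := by
    rw [← hθ (k + 1), hk1]; simp [RotBy]; rfl
  -- pythagoras
  have hpy : s ^ 2 + c ^ 2 = 1 := Real.sin_sq_add_cos_sq (θ k)
  have hpy' : s' ^ 2 + c' ^ 2 = 1 := Real.sin_sq_add_cos_sq (θ (k + 1))
  -- positivity of denominators
  have hc : 0 < 1 + c := one_add_cos_pos (hθrange k)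
  have hc' : 0 < 1 + c' := one_add_cos_pos (hθrange (k + 1))
  have hcne : (1 + c) ≠ 0 := ne_of_gt hc
  have hcne' : (1 + c') ≠ 0 := ne_of_gt hc'
  -- ν k is a unit vector
  have hvunit : ν k 0 ^ 2 + ν k 1 ^ 2 = 1 := by
    rw [hv0, hv1]
    linear_combination (u0 ^ 2 + u1 ^ 2) * hpy + hunit
  -- inner products
  have hvu : ν k 0 * u0 + ν k 1 * u1 = c := by
    rw [hv0, hv1]; linear_combination c * hunit
  have hwv : ν (k + 1) 0 * ν k 0 + ν (k + 1) 1 * ν k 1 = c' := by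
    rw [hw0, hw1]; linear_combination c' * hvunit
  have hwu : ν (k + 1) 0 * u0 + ν (k + 1) 1 * u1 = c * c' - s * s' := by
    rw [hw0, hw1, hv0, hv1]; linear_combination (c * c' - s * s') * hunit
  have hwunit : ν (k + 1) 0 ^ 2 + ν (k + 1) 1 ^ 2 = 1 := by
    rw [hw0, hw1]
    linear_combination (ν k 0 ^ 2 + ν k 1 ^ 2) * hpy' + hvunit
  -- components of N
  have hN0 : N k 0 = (1 + c)⁻¹ * (ν k 0 + u0) := by
    rw [hN k]; simp [← hcdef, ← hu0]; ring
  have hN1 : N k 1 = (1 + c)⁻¹ * (ν k 1 + u1) := by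
    rw [hN k]; simp [← hcdef, ← hu1]; ring
  have hN0' : N (k + 1) 0 = (1 + c')⁻¹ * (ν (k + 1) 0 + ν k 0) := by
    rw [hN (k + 1), hk1]; simp [← hc'def]; ring
  have hN1' : N (k + 1) 1 = (1 + c')⁻¹ * (ν (k + 1) 1 + ν k 1) := by
    rw [hN (k + 1), hk1]; simp [← hc'def]; ring
  -- tan half-angle
  have ht : Real.tan (θ k / 2) = s / (1 + c) := tan_half_eq (hθrange k)
  have ht' : Real.tan (θ (k + 1) / 2) = s' / (1 + c') := tan_half_eq (hθrange (k + 1))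
  have e1 : ‖N (k + 1) - N k‖ ^ 2 =
      ((1 + c')⁻¹) ^ 2 * (2 + 2 * c')
        - 2 * ((1 + c')⁻¹ * (1 + c)⁻¹) * (1 + c + c' + (c * c' - s * s'))
        + ((1 + c)⁻¹) ^ 2 * (2 + 2 * c) := by
    rw [norm_sq_E2, PiLp.sub_apply, PiLp.sub_apply, hN0, hN1, hN0', hN1']
    linear_combination ((1 + c')⁻¹) ^ 2 * hwunit + ((1 + c')⁻¹) ^ 2 * hvunit
      + 2 * ((1 + c')⁻¹) ^ 2 * hwv
      - 2 * ((1 + c')⁻¹ * (1 + c)⁻¹) * (hwv + hwu + hvunit + hvu)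
      + ((1 + c)⁻¹) ^ 2 * (hvunit + hunit + 2 * hvu)
  have key : ((1 + c')⁻¹) ^ 2 * (2 + 2 * c')
        - 2 * ((1 + c')⁻¹ * (1 + c)⁻¹) * (1 + c + c' + (c * c' - s * s'))
        + ((1 + c)⁻¹) ^ 2 * (2 + 2 * c) = (s / (1 + c) + s' / (1 + c')) ^ 2 := by
    have expand : ((1 + c')⁻¹) ^ 2 * (2 + 2 * c')
        - 2 * ((1 + c')⁻¹ * (1 + c)⁻¹) * (1 + c + c' + (c * c' - s * s'))
        + ((1 + c)⁻¹) ^ 2 * (2 + 2 * c)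
        = (2 - 2 * c * c' + 2 * s * s') / ((1 + c) * (1 + c')) := by
      field_simp
      ring
    rw [expand, div_add_div _ _ hcne hcne', div_pow,
      div_eq_div_iff (mul_ne_zero hcne hcne') (pow_ne_zero 2 (mul_ne_zero hcne hcne'))]
    linear_combination (-(1 + c) * (1 + c') * (1 + c') ^ 2) * hpy
      + (-(1 + c) * (1 + c') * (1 + c) ^ 2) * hpy'
  rw [ht, ht', e1, key]
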